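/- Let d ≥ 1 be an integer and let F(t) := 2·∑_{m=1}^∞ e^{−m²t} for t > 0. Then (1 + 1/d)·log 2 ≤ inf{ t > 0 : F(t)^d ≤ 1/2 } ≤ log(2^{1+1/d} + 1). -/

import Mathlib

open Real

lemma heat_term_le {t : ℝ} (ht : 0 < t) (m : ℕ) :
    Real.exp (-((m : ℝ) + 1) ^ 2 * t) ≤ Real.exp (-t) ^ (m + 1) := by
  rw [← Real.exp_nat_mul]
  apply Real.exp_le_exp.mpr
  push_cast
  nlinarith [mul_nonneg (sq_nonneg ((m:ℝ))) ht.le,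
    mul_nonneg (Nat.cast_nonneg (α := ℝ) m) ht.le]

lemma heat_summable {t : ℝ} (ht : 0 < t) :
    Summable (fun m : ℕ => Real.exp (-((m : ℝ) + 1) ^ 2 * t)) := by
  have hr0 : (0:ℝ) ≤ Real.exp (-t) := (Real.exp_pos _).le
  have hr1 : Real.exp (-t) < 1 := by
    rw [Real.exp_lt_one_iff]; linarith
  have hg : Summable (fun m : ℕ => Real.exp (-t) ^ (m + 1)) := by
    simpa [pow_succ] using (summable_geometric_of_lt_one hr0 hr1).mul_right (Real.exp (-t))
  exact Summable.of_nonneg_of_le (fun m => (Real.exp_pos _).le) (heat_term_le ht) hg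

lemma heat_lower {t : ℝ} (ht : 0 < t) :
    Real.exp (-t) ≤ ∑' m : ℕ, Real.exp (-((m : ℝ) + 1) ^ 2 * t) := by
  have := Summable.le_tsum (heat_summable ht) 0 (fun m _ => (Real.exp_pos _).le)
  simpa using this

lemma heat_upper {t : ℝ} (ht : 0 < t) :
    ∑' m : ℕ, Real.exp (-((m : ℝ) + 1) ^ 2 * t)
      ≤ Real.exp (-t) / (1 - Real.exp (-t)) := by
  have hr0 : (0:ℝ) ≤ Real.exp (-t) := (Real.exp_pos _).le
  have hr1 : Real.exp (-t) < 1 := by rw [Real.exp_lt_one_iff]; linarith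
  have hg : Summable (fun m : ℕ => Real.exp (-t) ^ (m + 1)) := by
    simpa [pow_succ] using (summable_geometric_of_lt_one hr0 hr1).mul_right (Real.exp (-t))
  calc ∑' m : ℕ, Real.exp (-((m : ℝ) + 1) ^ 2 * t)
      ≤ ∑' m : ℕ, Real.exp (-t) ^ (m + 1) :=
        Summable.tsum_le_tsum (heat_term_le ht) (heat_summable ht) hg
    _ = Real.exp (-t) / (1 - Real.exp (-t)) := by
        rw [show (fun m : ℕ => Real.exp (-t) ^ (m+1))
            = fun m : ℕ => Real.exp (-t) ^ m * Real.exp (-t) from funext fun m => by ring,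
          tsum_mul_right, tsum_geometric_of_lt_one hr0 hr1]
        field_simp

/-- The cb-return time estimate of Example 4.7 for the `d`-torus: with
`F(t) = 2·∑_{m=1}^∞ e^{-m²t}`, so that `F(t)^d = ‖T_t - E‖_{L₁(𝕋^d)→L∞(𝕋^d)}`,
one has `(1 + 1/d)·log 2 ≤ inf{t > 0 : F(t)^d ≤ 1/2} ≤ log(2^{1+1/d} + 1)`. -/
theorem torus_cb_return_time_estimate (d : ℕ) (hd : 1 ≤ d) :
    (1 + 1 / (d : ℝ)) * Real.log 2 ≤ sInf {t : ℝ | 0 < t ∧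
        (2 * ∑' m : ℕ, Real.exp (-((m : ℝ) + 1) ^ 2 * t)) ^ d ≤ 1 / 2} ∧
    sInf {t : ℝ | 0 < t ∧
        (2 * ∑' m : ℕ, Real.exp (-((m : ℝ) + 1) ^ 2 * t)) ^ d ≤ 1 / 2} ≤
      Real.log ((2 : ℝ) ^ (1 + 1 / (d : ℝ)) + 1) := by
  have hdR : (0:ℝ) < d := by exact_mod_cast hd
  set c : ℝ := 1 / (d:ℝ) with hc
  have hc0 : 0 < c := by positivity
  have hcd : c * d = 1 := by rw [hc]; field_simp
  set S := {t : ℝ | 0 < t ∧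
        (2 * ∑' m : ℕ, Real.exp (-((m : ℝ) + 1) ^ 2 * t)) ^ d ≤ 1 / 2} with hS
  have hpowhalf : ((2:ℝ) ^ (-c)) ^ d = 1 / 2 := by
    rw [← Real.rpow_natCast ((2:ℝ) ^ (-c)) d, ← Real.rpow_mul (by norm_num),
      show -c * d = -1 by linarith [hcd]]
    norm_num [Real.rpow_neg_one]
  set t₀ : ℝ := Real.log ((2 : ℝ) ^ (1 + c) + 1) with ht₀
  have hA : (1:ℝ) < (2 : ℝ) ^ (1 + c) + 1 := by
    have : (0:ℝ) < (2:ℝ) ^ (1 + c) := Real.rpow_pos_of_pos two_pos _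
    linarith
  have ht₀pos : 0 < t₀ := Real.log_pos hA
  have hexp_t₀ : Real.exp (-t₀) = ((2 : ℝ) ^ (1 + c) + 1)⁻¹ := by
    rw [Real.exp_neg, Real.exp_log (by linarith)]
  -- t₀ ∈ S
  have ht₀S : t₀ ∈ S := by
    refine ⟨ht₀pos, ?_⟩
    have hF : 2 * ∑' m : ℕ, Real.exp (-((m : ℝ) + 1) ^ 2 * t₀) ≤ (2:ℝ) ^ (-c) := by
      have h1 := heat_upper ht₀pos
      have h3 : (0:ℝ) < (2:ℝ) ^ (1 + c) := Real.rpow_pos_of_pos two_pos _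
      have h2 : Real.exp (-t₀) / (1 - Real.exp (-t₀)) = ((2:ℝ) ^ (1 + c))⁻¹ := by
        rw [hexp_t₀]; field_simp; ring
      have h4 : (2:ℝ) * ((2:ℝ) ^ (1 + c))⁻¹ = (2:ℝ) ^ (-c) := by
        calc (2:ℝ) * ((2:ℝ) ^ (1 + c))⁻¹
            = (2:ℝ) ^ (1:ℝ) * (2:ℝ) ^ (-(1 + c)) := by
              rw [Real.rpow_neg (by norm_num : (0:ℝ) ≤ 2), Real.rpow_one]
          _ = (2:ℝ) ^ ((1:ℝ) + -(1 + c)) := (Real.rpow_add two_pos _ _).symm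
          _ = (2:ℝ) ^ (-c) := by congr 1; ring
      calc 2 * ∑' m : ℕ, Real.exp (-((m : ℝ) + 1) ^ 2 * t₀)
          ≤ 2 * (Real.exp (-t₀) / (1 - Real.exp (-t₀))) := by linarith
        _ = (2:ℝ) ^ (-c) := by rw [h2, h4]
    have hF0 : 0 ≤ 2 * ∑' m : ℕ, Real.exp (-((m : ℝ) + 1) ^ 2 * t₀) := by
      linarith [heat_lower ht₀pos, (Real.exp_pos (-t₀)).le]
    calc (2 * ∑' m : ℕ, Real.exp (-((m : ℝ) + 1) ^ 2 * t₀)) ^ d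
        ≤ ((2:ℝ) ^ (-c)) ^ d := pow_le_pow_left₀ hF0 hF d
      _ = 1 / 2 := hpowhalf
  -- lower bound for all elements of S
  have hlb : ∀ t ∈ S, (1 + c) * Real.log 2 ≤ t := by
    intro t ht
    obtain ⟨htpos, htle⟩ := ht
    have hFl : 2 * Real.exp (-t) ≤ 2 * ∑' m : ℕ, Real.exp (-((m : ℝ) + 1) ^ 2 * t) := by
      linarith [heat_lower htpos]
    have h0 : (0:ℝ) ≤ 2 * Real.exp (-t) := by positivity
    have hpow : (2 * Real.exp (-t)) ^ d ≤ ((2:ℝ) ^ (-c)) ^ d := by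
      rw [hpowhalf]
      exact (pow_le_pow_left₀ h0 hFl d).trans htle
    have hroot : 2 * Real.exp (-t) ≤ (2:ℝ) ^ (-c) := by
      have hd0 : d ≠ 0 := by omega
      exact (pow_le_pow_iff_left₀ h0 (Real.rpow_pos_of_pos two_pos _).le hd0).mp hpow
    have h2 : (2:ℝ) ^ (-c) / 2 = (2:ℝ) ^ (-(1 + c)) := by
      have hne : (2:ℝ) ^ (c:ℝ) ≠ 0 := (Real.rpow_pos_of_pos two_pos _).ne'
      rw [Real.rpow_neg (by norm_num : (0:ℝ) ≤ 2),
        Real.rpow_neg (by norm_num : (0:ℝ) ≤ 2), Real.rpow_add two_pos, Real.rpow_one]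
      field_simp
    have h3 : Real.exp (-t) ≤ (2:ℝ) ^ (-(1 + c)) := by
      rw [← h2]; linarith
    have hexpc : Real.exp (-t) ≤ Real.exp (-(1 + c) * Real.log 2) := by
      calc Real.exp (-t) ≤ (2:ℝ) ^ (-(1 + c)) := h3
        _ = Real.exp (-(1 + c) * Real.log 2) := by
            rw [← Real.exp_log (Real.rpow_pos_of_pos two_pos (-(1 + c))),
              Real.log_rpow two_pos]
    have := Real.exp_le_exp.mp hexpc
    nlinarith
  have hbdd : BddBelow S := ⟨(1 + c) * Real.log 2, hlb⟩
  exact ⟨le_csInf ⟨t₀, ht₀S⟩ hlb, csInf_le hbdd ht₀S⟩
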